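/- Let M* = V*V*ᵀ be symmetric PSD of rank r, U ∈ ℝ^{d×r}, U* = P_{X*}(U) the closest point of U in X* = {V*R : R orthogonal}, and Δ = U - U*. Then 3‖UUᵀ - M*‖_F² - ‖ΔΔᵀ‖_F² ≥ (4√3 - 6)·σ_r(M*)·‖Δ‖_F². -/

import Mathlib

open Matrix

/-- The Frobenius norm of a real matrix. -/
noncomputable def frob {m n : ℕ} (A : Matrix (Fin m) (Fin n) ℝ) : ℝ :=
  Real.sqrt (∑ i, ∑ j, (A i j) ^ 2)

namespace SaddleAux

variable {d r : ℕ}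

lemma frob_sq (A : Matrix (Fin d) (Fin r) ℝ) : frob A ^ 2 = trace (Aᵀ * A) := by
  have h : (0:ℝ) ≤ ∑ i, ∑ j, (A i j)^2 :=
    Finset.sum_nonneg fun i _ => Finset.sum_nonneg fun j _ => sq_nonneg _
  rw [frob, Real.sq_sqrt h, Matrix.trace]
  simp only [Matrix.diag, Matrix.mul_apply, Matrix.transpose_apply]
  rw [Finset.sum_comm]
  simp [sq]

lemma frob_nonneg (A : Matrix (Fin d) (Fin r) ℝ) : 0 ≤ frob A := Real.sqrt_nonneg _

lemma trace_mul_sum (A B : Matrix (Fin r) (Fin r) ℝ) :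
    trace (A * B) = ∑ i, ∑ j, A i j * B j i := by
  simp [Matrix.trace, Matrix.diag, Matrix.mul_apply]

lemma trace_sq_nonneg_of_symm (M : Matrix (Fin r) (Fin r) ℝ) (h : Mᵀ = M) :
    0 ≤ trace (M * M) := by
  rw [trace_mul_sum]
  apply Finset.sum_nonneg; intro i _
  apply Finset.sum_nonneg; intro j _
  have hji : M j i = M i j := by
    have h2 := Matrix.transpose_apply M i j
    rw [h] at h2
    exact h2.symm
  rw [hji]; exact mul_self_nonneg _

lemma trace_cs (A B : Matrix (Fin r) (Fin r) ℝ) (hA : Aᵀ = A) (hB : Bᵀ = B) :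
    (trace (A * B))^2 ≤ trace (A * A) * trace (B * B) := by
  have hAij : ∀ i j, A j i = A i j := fun i j => by
    have h2 := Matrix.transpose_apply A i j; rw [hA] at h2; exact h2.symm
  have hBij : ∀ i j, B j i = B i j := fun i j => by
    have h2 := Matrix.transpose_apply B i j; rw [hB] at h2; exact h2.symm
  have h1 : trace (A * B) = ∑ p : Fin r × Fin r, A p.1 p.2 * B p.1 p.2 := by
    rw [trace_mul_sum, Fintype.sum_prod_type]
    exact Finset.sum_congr rfl fun i _ => Finset.sum_congr rfl fun j _ => by rw [hBij]
  have h2 : trace (A * A) = ∑ p : Fin r × Fin r, (A p.1 p.2)^2 := by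
    rw [trace_mul_sum, Fintype.sum_prod_type]
    exact Finset.sum_congr rfl fun i _ => Finset.sum_congr rfl fun j _ => by
      rw [hAij]; ring
  have h3 : trace (B * B) = ∑ p : Fin r × Fin r, (B p.1 p.2)^2 := by
    rw [trace_mul_sum, Fintype.sum_prod_type]
    exact Finset.sum_congr rfl fun i _ => Finset.sum_congr rfl fun j _ => by
      rw [hBij]; ring
  rw [h1, h2, h3]
  exact Finset.sum_mul_sq_le_sq_mul_sq Finset.univ _ _

lemma trace_quad (Δ : Matrix (Fin d) (Fin r) ℝ) (M : Matrix (Fin r) (Fin r) ℝ)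
    (hM : ∀ v : Fin r → ℝ, 0 ≤ v ⬝ᵥ (M *ᵥ v)) : 0 ≤ trace (Δ * M * Δᵀ) := by
  rw [Matrix.trace]
  apply Finset.sum_nonneg; intro i _
  have heq : (Δ * M * Δᵀ).diag i = (fun j => Δ i j) ⬝ᵥ (M *ᵥ fun j => Δ i j) := by
    simp only [Matrix.diag, Matrix.mul_apply, Matrix.transpose_apply, dotProduct,
      Matrix.mulVec, Finset.sum_mul, Finset.mul_sum]
    rw [Finset.sum_comm]
    apply Finset.sum_congr rfl; intro k _
    apply Finset.sum_congr rfl; intro j _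
    ring
  rw [heq]
  exact hM _

lemma core_ineq (x y w m : ℝ) (hx : 0 ≤ x) (hw : 0 ≤ w) (hm : 0 ≤ m)
    (h1 : x ≤ y + m) (h2 : y^2 ≤ x * w) :
    4 * x ≤ 6 * w + (12 - 4 * Real.sqrt 3) * m := by
  have hs3 : (Real.sqrt 3)^2 = 3 := Real.sq_sqrt (by norm_num)
  have hs3' : Real.sqrt 3 ≤ 2 := by nlinarith [Real.sqrt_nonneg 3]
  rcases le_or_gt x m with h | h
  · nlinarith [Real.sqrt_nonneg 3]
  · have hy : x - m ≤ y := by linarith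
    have hy0 : 0 ≤ x - m := by linarith
    have h5 : (x - m)^2 ≤ x * w := by nlinarith
    have hxpos : 0 < x := lt_of_le_of_lt hm h
    have hexp : (x - Real.sqrt 3 * m)^2 = x^2 - 2*(Real.sqrt 3)*m*x + 3*m^2 := by
      linear_combination (m^2) * hs3
    have key : 0 ≤ (6 * w + (12 - 4 * Real.sqrt 3) * m - 4 * x) * x := by
      nlinarith [sq_nonneg (x - Real.sqrt 3 * m), h5, hexp]
    have := (mul_nonneg_iff_of_pos_right hxpos).mp key
    linarith


/-- trace (A Bᵀ C Dᵀ) for d×r matrices. -/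
noncomputable def tr4 (A B C D : Matrix (Fin d) (Fin r) ℝ) : ℝ :=
  trace (A * (Bᵀ * (C * Dᵀ)))

lemma tr4_cyc (A B C D : Matrix (Fin d) (Fin r) ℝ) : tr4 A B C D = tr4 C D A B := by
  unfold tr4
  rw [show A * (Bᵀ * (C * Dᵀ)) = (A * Bᵀ) * (C * Dᵀ) by simp [Matrix.mul_assoc],
    Matrix.trace_mul_comm]
  simp [Matrix.mul_assoc]

lemma tr4_rev (A B C D : Matrix (Fin d) (Fin r) ℝ) : tr4 A B C D = tr4 D C B A := by
  unfold tr4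
  rw [← Matrix.trace_transpose]
  simp only [Matrix.transpose_mul, Matrix.transpose_transpose]
  simp [Matrix.mul_assoc]

lemma tr2 (A B C D : Matrix (Fin d) (Fin r) ℝ) :
    trace ((Aᵀ * B) * (Cᵀ * D)) = tr4 B C D A := by
  rw [show (Aᵀ * B) * (Cᵀ * D) = Aᵀ * (B * (Cᵀ * D)) by simp [Matrix.mul_assoc],
    Matrix.trace_mul_comm]
  unfold tr4
  simp [Matrix.mul_assoc]

lemma trace_stdBasisMatrix_mul (a b : Fin r) (M : Matrix (Fin r) (Fin r) ℝ) :
    trace (single a b (1:ℝ) * M) = M b a := by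
  rw [Matrix.trace]
  rw [Finset.sum_eq_single a]
  · simp [Matrix.diag, Matrix.single_mul_apply_same]
  · intro k _ hk
    simp [Matrix.diag, hk]
  · intro h; exact absurd (Finset.mem_univ a) h

lemma transpose_stdBasisMatrix (a b : Fin r) (c : ℝ) :
    (single a b c)ᵀ = single b a c := by
  ext i j
  simp only [Matrix.transpose_apply, Matrix.single, Matrix.of_apply]
  by_cases h1 : a = j <;> by_cases h2 : b = i <;> simp [h1, h2]

lemma rayleigh {n : ℕ} (A : Matrix (Fin n) (Fin n) ℝ) (hA : A.IsHermitian) (σ : ℝ)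
    (hσ : ∀ i, σ ≤ hA.eigenvalues i) (v : Fin n → ℝ) :
    σ * (v ⬝ᵥ v) ≤ v ⬝ᵥ (A *ᵥ v) := by
  classical
  set W : Matrix (Fin n) (Fin n) ℝ := (hA.eigenvectorUnitary : Matrix (Fin n) (Fin n) ℝ) with hW
  have hstar : star W = Wᵀ := by
    rw [Matrix.star_eq_conjTranspose]
    ext i j
    simp [Matrix.conjTranspose_apply]
  have hmem := (hA.eigenvectorUnitary).prop
  rw [Matrix.mem_unitaryGroup_iff] at hmem
  have hWW : W * Wᵀ = 1 := by rw [← hstar]; exact hmem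
  set u : Fin n → ℝ := Wᵀ *ᵥ v with hu
  have h1 : v ⬝ᵥ (A *ᵥ v) = ∑ i, hA.eigenvalues i * (u i * u i) := by
    conv_lhs => rw [hA.spectral_theorem, Unitary.conjStarAlgAut_apply, ← hW, hstar]
    rw [show W * Matrix.diagonal (RCLike.ofReal ∘ hA.eigenvalues) * Wᵀ
        = W * (Matrix.diagonal (RCLike.ofReal ∘ hA.eigenvalues) * Wᵀ) by
      rw [Matrix.mul_assoc]]
    rw [← Matrix.mulVec_mulVec]
    rw [Matrix.dotProduct_mulVec v W, ← Matrix.mulVec_transpose, ← hu,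
      ← Matrix.mulVec_mulVec]
    simp only [dotProduct, Matrix.mulVec_diagonal, Function.comp_apply,
      RCLike.ofReal_real_eq_id, id_eq]
    apply Finset.sum_congr rfl; intro i _
    ring
  have h2 : u ⬝ᵥ u = v ⬝ᵥ v := by
    rw [hu]
    rw [show (Wᵀ *ᵥ v) ⬝ᵥ (Wᵀ *ᵥ v) = ((Wᵀ *ᵥ v) ᵥ* Wᵀ) ⬝ᵥ v from
      Matrix.dotProduct_mulVec _ _ _]
    rw [Matrix.vecMul_transpose, Matrix.mulVec_mulVec, hWW, Matrix.one_mulVec]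
  have h3 : σ * (v ⬝ᵥ v) = ∑ i, σ * (u i * u i) := by
    rw [← h2]
    simp [dotProduct, Finset.mul_sum]
  rw [h1, h3]
  apply Finset.sum_le_sum
  intro i _
  exact mul_le_mul_of_nonneg_right (hσ i) (mul_self_nonneg _)



lemma tr2' (A B C D : Matrix (Fin d) (Fin r) ℝ) :
    trace ((A * Bᵀ) * (C * Dᵀ)) = tr4 A B C D := by
  unfold tr4
  rw [show (A * Bᵀ) * (C * Dᵀ) = A * (Bᵀ * (C * Dᵀ)) by simp [Matrix.mul_assoc]]

lemma trace_vecMulVec_mul (v : Fin r → ℝ) (M : Matrix (Fin r) (Fin r) ℝ) :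
    trace (vecMulVec v v * M) = v ⬝ᵥ (M *ᵥ v) := by
  rw [trace_mul_sum]
  simp only [Matrix.vecMulVec_apply, dotProduct, Matrix.mulVec, Finset.mul_sum]
  rw [Finset.sum_comm]
  apply Finset.sum_congr rfl; intro i _
  apply Finset.sum_congr rfl; intro j _
  ring

lemma reflection_sq (W : Matrix (Fin r) (Fin r) ℝ) (a c : ℝ) (hW : W * W = c • W)
    (h : a * (a * c) = a + a) : (1 - a • W) * (1 - a • W) = 1 := by
  have expand : (1 - a • W) * (1 - a • W) = 1 - a • W - a • W + (a * (a * c)) • W := by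
    simp only [Matrix.sub_mul, Matrix.mul_sub, Matrix.one_mul, Matrix.mul_one,
      smul_mul_assoc, mul_smul_comm, hW, smul_smul]
    module
  rw [expand, h, add_smul]
  abel

lemma givens_contradiction (cs ds ρ : ℝ) (hcs0 : 0 ≤ cs) (hds0 : ds ≠ 0)
    (hρpos : 0 < ρ) (hρsq : ρ^2 = cs^2 + ds^2)
    (hineq : (cs/ρ - 1) * cs + (ds/ρ) * ds ≤ 0) : False := by
  have hid : (cs/ρ) * cs + (ds/ρ) * ds = ρ := by
    field_simp
    linear_combination -hρsq
  have hρle : ρ ≤ cs := by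
    have h1 : (cs/ρ - 1) * cs = (cs/ρ) * cs - cs := by ring
    rw [h1] at hineq
    linarith [hid, hineq]
  have hds2 : 0 < ds^2 := lt_of_le_of_ne (sq_nonneg ds) (Ne.symm (pow_ne_zero 2 hds0))
  have hmul : 0 ≤ (cs - ρ) * (cs + ρ) :=
    mul_nonneg (by linarith) (by linarith)
  nlinarith [hmul, hρsq, hds2]

end SaddleAux

set_option maxHeartbeats 2000000

open SaddleAux

/-- Let `M* = V*V*ᵀ` be symmetric PSD of rank `r`, `U*` the closest point of
`U` in `X* = {V*R : R orthogonal}` and `Δ = U - U*`.  Then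
`3‖UUᵀ - M*‖_F² - ‖ΔΔᵀ‖_F² ≥ (4√3 - 6)·σ_r(M*)·‖Δ‖_F²`, where `σ_r(M*)` (the
smallest nonzero singular value of `M*`) equals the smallest eigenvalue of
`V*ᵀV*`. -/
theorem matrix_factorization_saddle_key_inequality {d r : ℕ} (hr : 0 < r)
    (Vs : Matrix (Fin d) (Fin r) ℝ) (hrank : Vs.rank = r)
    (σr : ℝ)
    (hherm : (Vsᵀ * Vs).IsHermitian)
    (hσr : σr = haveI : Nonempty (Fin r) := Fin.pos_iff_nonempty.mp hr
      ⨅ i, hherm.eigenvalues i)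
    (U Us : Matrix (Fin d) (Fin r) ℝ)
    (hUs : ∃ R : Matrix (Fin r) (Fin r) ℝ,
      R * Rᵀ = 1 ∧ Rᵀ * R = 1 ∧ Us = Vs * R)
    (hproj : ∀ R : Matrix (Fin r) (Fin r) ℝ, R * Rᵀ = 1 → Rᵀ * R = 1 →
      frob (U - Us) ≤ frob (U - Vs * R)) :
    (4 * Real.sqrt 3 - 6) * σr * frob (U - Us) ^ 2 ≤
      3 * frob (U * Uᵀ - Vs * Vsᵀ) ^ 2 - frob ((U - Us) * (U - Us)ᵀ) ^ 2 := by
  classical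
  obtain ⟨R₀, hR₀1, hR₀2, hUsR₀⟩ := hUs
  -- Step 1: the variational characterization of the projection
  have key : ∀ R : Matrix (Fin r) (Fin r) ℝ, R * Rᵀ = 1 → Rᵀ * R = 1 →
      trace ((Vs * R)ᵀ * U) ≤ trace (Usᵀ * U) := by
    intro R h1 h2
    have hp := hproj R h1 h2
    have hsq : frob (U - Us) ^ 2 ≤ frob (U - Vs * R) ^ 2 :=
      pow_le_pow_left₀ (frob_nonneg _) hp 2
    rw [frob_sq, frob_sq] at hsq
    have expand : ∀ W : Matrix (Fin d) (Fin r) ℝ,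
        trace ((U - W)ᵀ * (U - W)) =
          trace (Uᵀ * U) - 2 * trace (Wᵀ * U) + trace (Wᵀ * W) := by
      intro W
      have hm : (U - W)ᵀ * (U - W) = Uᵀ * U - Wᵀ * U - Uᵀ * W + Wᵀ * W := by
        rw [Matrix.transpose_sub, Matrix.sub_mul, Matrix.mul_sub, Matrix.mul_sub]
        abel
      rw [hm, Matrix.trace_add, Matrix.trace_sub, Matrix.trace_sub]
      have h3 : trace (Uᵀ * W) = trace (Wᵀ * U) := by
        rw [← Matrix.trace_transpose (Uᵀ * W), Matrix.transpose_mul,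
          Matrix.transpose_transpose]
      rw [h3]; ring
    rw [expand Us, expand (Vs * R)] at hsq
    have hWW : trace ((Vs * R)ᵀ * (Vs * R)) = trace (Vsᵀ * Vs) := by
      rw [Matrix.transpose_mul,
        show Rᵀ * Vsᵀ * (Vs * R) = (Rᵀ * (Vsᵀ * Vs)) * R by simp [Matrix.mul_assoc],
        Matrix.trace_mul_comm, ← Matrix.mul_assoc, h1, Matrix.one_mul]
    have hUU : trace (Usᵀ * Us) = trace (Vsᵀ * Vs) := by
      rw [hUsR₀, Matrix.transpose_mul,
        show R₀ᵀ * Vsᵀ * (Vs * R₀) = (R₀ᵀ * (Vsᵀ * Vs)) * R₀ by simp [Matrix.mul_assoc],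
        Matrix.trace_mul_comm, ← Matrix.mul_assoc, hR₀1, Matrix.one_mul]
    linarith
  -- Step 2: quadratic form of Usᵀ U is nonnegative (Householder reflections)
  have hquadS : ∀ v : Fin r → ℝ, 0 ≤ v ⬝ᵥ ((Usᵀ * U) *ᵥ v) := by
    intro v
    by_cases hv : v = 0
    · simp [hv]
    · have hc : 0 < v ⬝ᵥ v := by
        rcases (Finset.sum_nonneg fun i (_ : i ∈ Finset.univ) =>
          mul_self_nonneg (v i)).lt_or_eq with h | h
        · exact h
        · exfalso; apply hv
          funext i
          have h0 := (Finset.sum_eq_zero_iff_of_nonneg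
            (fun i _ => mul_self_nonneg (v i))).mp h.symm i (Finset.mem_univ i)
          simpa using mul_self_eq_zero.mp h0
      set c := v ⬝ᵥ v with hcdef
      set V : Matrix (Fin r) (Fin r) ℝ := vecMulVec v v with hV
      have hVsymm : Vᵀ = V := by
        ext i j
        simp [hV, Matrix.vecMulVec_apply, mul_comm]
      have hVV : V * V = c • V := by
        ext i j
        simp only [hV, Matrix.mul_apply, Matrix.vecMulVec_apply, Matrix.smul_apply,
          smul_eq_mul, hcdef, dotProduct]
        rw [Finset.sum_mul]
        apply Finset.sum_congr rfl; intro k _; ring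
      set H : Matrix (Fin r) (Fin r) ℝ := 1 - (2/c) • V with hH
      have hHsymm : Hᵀ = H := by
        rw [hH, Matrix.transpose_sub, Matrix.transpose_one, Matrix.transpose_smul, hVsymm]
      have hHH : H * H = 1 := by
        rw [hH]
        exact reflection_sq V (2/c) c hVV (by field_simp; ring)
      have hR : (R₀ * H) * (R₀ * H)ᵀ = 1 := by
        rw [Matrix.transpose_mul, hHsymm,
          show R₀ * H * (H * R₀ᵀ) = R₀ * ((H * H) * R₀ᵀ) by simp [Matrix.mul_assoc],
          hHH, Matrix.one_mul, hR₀1]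
      have hR' : (R₀ * H)ᵀ * (R₀ * H) = 1 := mul_eq_one_comm.mp hR
      have hk := key (R₀ * H) hR hR'
      rw [show Vs * (R₀ * H) = Us * H from by rw [hUsR₀, Matrix.mul_assoc]] at hk
      rw [show (Us * H)ᵀ * U = H * (Usᵀ * U) from by
        rw [Matrix.transpose_mul, hHsymm, Matrix.mul_assoc]] at hk
      rw [hH, Matrix.sub_mul, Matrix.one_mul, smul_mul_assoc, Matrix.trace_sub,
        Matrix.trace_smul, trace_vecMulVec_mul] at hk
      have h2c : 0 < 2/c := by positivity
      have : 0 ≤ (2/c) * (v ⬝ᵥ ((Usᵀ * U) *ᵥ v)) := by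
        simp only [smul_eq_mul] at hk
        linarith
      exact (mul_nonneg_iff_of_pos_left h2c).mp this
  have hdiag : ∀ i, 0 ≤ (Usᵀ * U) i i := by
    intro i
    have h := hquadS (Pi.single i 1)
    rwa [Matrix.mulVec_single, show (Pi.single i 1 ⬝ᵥ MulOpposite.op (1:ℝ) • (Usᵀ * U).col i)
      = (Usᵀ * U) i i from by simp [dotProduct, Pi.single_apply]] at h
  -- Step 3: symmetry of Usᵀ U via Givens rotations
  have hSsymm : (Usᵀ * U)ᵀ = Usᵀ * U := by
    ext i j
    rw [Matrix.transpose_apply]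
    rcases eq_or_ne i j with rfl | hij
    · rfl
    by_contra hne
    set cs : ℝ := (Usᵀ * U) i i + (Usᵀ * U) j j with hcs
    set ds : ℝ := (Usᵀ * U) i j - (Usᵀ * U) j i with hds
    have hds0 : ds ≠ 0 := by
      intro h0
      exact hne (sub_eq_zero.mp h0).symm
    have hcs0 : 0 ≤ cs := add_nonneg (hdiag i) (hdiag j)
    have hsum_pos : 0 < cs^2 + ds^2 := by
      have hq : 0 < ds^2 := lt_of_le_of_ne (sq_nonneg ds) (Ne.symm (pow_ne_zero 2 hds0))
      nlinarith [sq_nonneg cs]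
    set ρ : ℝ := Real.sqrt (cs^2 + ds^2) with hρ
    have hρpos : 0 < ρ := Real.sqrt_pos.mpr hsum_pos
    have hρsq : ρ^2 = cs^2 + ds^2 := Real.sq_sqrt hsum_pos.le
    set A : Matrix (Fin r) (Fin r) ℝ := single i i 1 + single j j 1 with hA
    set B : Matrix (Fin r) (Fin r) ℝ := single i j 1 - single j i 1 with hB
    have mul0 : ∀ (a b k l : Fin r), b ≠ k →
        single a b (1:ℝ) * single k l (1:ℝ) = 0 :=
      fun a b k l h => Matrix.single_mul_single_of_ne (1:ℝ) a b k h 1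
    have mul1 : ∀ (a b l : Fin r),
        single a b (1:ℝ) * single b l (1:ℝ) = single a l (1:ℝ) :=
      fun a b l => by simpa using Matrix.single_mul_single_same (1:ℝ) a b l 1
    have z1 := mul0 i i j j hij
    have z2 := mul0 j j i i hij.symm
    have z3 := mul0 i i j i hij
    have z4 := mul0 j j i j hij.symm
    have z5 := mul0 i j i j hij.symm
    have z6 := mul0 j i j i hij
    have z8 := mul0 i j i i hij.symm
    have z9 := mul0 j i j j hij
    have hA2 : A * A = A := by
      rw [hA]
      simp only [Matrix.add_mul, Matrix.mul_add, mul1, z1, z2, add_zero, zero_add]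
    have hAB : A * B = B := by
      rw [hA, hB]
      simp only [Matrix.add_mul, Matrix.mul_add, Matrix.mul_sub, Matrix.sub_mul,
        mul1, z3, z4, add_zero, zero_add, sub_zero, zero_sub]
    have hBA : B * A = B := by
      rw [hA, hB]
      simp only [Matrix.add_mul, Matrix.mul_add, Matrix.mul_sub, Matrix.sub_mul,
        mul1, z8, z9, add_zero, zero_add, sub_zero, zero_sub]
      abel
    have hB2 : B * B = -A := by
      rw [hA, hB]
      simp only [Matrix.mul_sub, Matrix.sub_mul,
        mul1, z5, z6, add_zero, zero_add, sub_zero, zero_sub]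
      abel
    have hcsum : (cs/ρ)^2 + (ds/ρ)^2 = 1 := by
      field_simp
      linear_combination -hρsq
    set G : Matrix (Fin r) (Fin r) ℝ := 1 + (cs/ρ - 1) • A + (ds/ρ) • B with hG
    have hGT : Gᵀ = 1 + (cs/ρ - 1) • A - (ds/ρ) • B := by
      rw [hG]
      simp only [Matrix.transpose_add, Matrix.transpose_smul, Matrix.transpose_one, hA, hB,
        Matrix.transpose_sub, transpose_stdBasisMatrix]
      module
    have hGG : G * Gᵀ = 1 := by
      rw [hGT, hG]
      have expand : (1 + (cs/ρ - 1) • A + (ds/ρ) • B) * (1 + (cs/ρ - 1) • A - (ds/ρ) • B)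
          = 1 + ((cs/ρ - 1) * (cs/ρ - 1) + (cs/ρ - 1) + (cs/ρ - 1) + (ds/ρ) * (ds/ρ)) • A
            + ((cs/ρ - 1) * (ds/ρ) - (ds/ρ) * (cs/ρ - 1)) • B := by
        simp only [Matrix.add_mul, Matrix.mul_add, Matrix.mul_sub, Matrix.sub_mul,
          Matrix.one_mul, Matrix.mul_one, smul_mul_assoc, mul_smul_comm,
          hA2, hAB, hBA, hB2, smul_smul, smul_neg]
        module
      rw [expand,
        show (cs/ρ - 1) * (cs/ρ - 1) + (cs/ρ - 1) + (cs/ρ - 1) + (ds/ρ) * (ds/ρ)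
          = (cs/ρ)^2 + (ds/ρ)^2 - 1 from by ring, hcsum,
        show (cs/ρ - 1) * (ds/ρ) - (ds/ρ) * (cs/ρ - 1) = 0 from by ring]
      simp
    have hGR : (R₀ * G) * (R₀ * G)ᵀ = 1 := by
      rw [Matrix.transpose_mul,
        show R₀ * G * (Gᵀ * R₀ᵀ) = R₀ * ((G * Gᵀ) * R₀ᵀ) by simp [Matrix.mul_assoc],
        hGG, Matrix.one_mul, hR₀1]
    have hGR' := mul_eq_one_comm.mp hGR
    have hk := key (R₀ * G) hGR hGR'
    rw [show Vs * (R₀ * G) = Us * G from by rw [hUsR₀, Matrix.mul_assoc]] at hk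
    rw [show (Us * G)ᵀ * U = Gᵀ * (Usᵀ * U) from by
      rw [Matrix.transpose_mul, Matrix.mul_assoc]] at hk
    rw [hGT] at hk
    have htr : trace ((1 + (cs/ρ - 1) • A - (ds/ρ) • B) * (Usᵀ * U))
        = trace (Usᵀ * U) + (cs/ρ - 1) * cs + (ds/ρ) * ds := by
      rw [hA, hB]
      simp only [Matrix.add_mul, Matrix.sub_mul, Matrix.one_mul, smul_mul_assoc,
        Matrix.trace_add, Matrix.trace_sub, Matrix.trace_smul,
        trace_stdBasisMatrix_mul, smul_eq_mul]
      rw [hcs, hds]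
      ring
    rw [htr] at hk
    exact givens_contradiction cs ds ρ hcs0 hds0 hρpos hρsq (by linarith)
  -- Step 4: eigenvalue lower bound for Q = Usᵀ Us
  haveI : Nonempty (Fin r) := Fin.pos_iff_nonempty.mp hr
  have hσ_le : ∀ i, σr ≤ hherm.eigenvalues i := by
    intro i
    rw [hσr]
    exact ciInf_le (Set.Finite.bddBelow (Set.finite_range _)) i
  have hpsd : (Vsᵀ * Vs).PosSemidef := by
    have hct : Vsᴴ = Vsᵀ := by
      ext a b
      simp [Matrix.conjTranspose_apply]
    have h := Matrix.posSemidef_conjTranspose_mul_self Vs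
    rwa [hct] at h
  have hσ0 : 0 ≤ σr := by
    rw [hσr]
    exact le_ciInf fun i => hpsd.eigenvalues_nonneg i
  have hQform : ∀ v : Fin r → ℝ, σr * (v ⬝ᵥ v) ≤ v ⬝ᵥ ((Usᵀ * Us) *ᵥ v) := by
    intro v
    have h1 : Usᵀ * Us = R₀ᵀ * ((Vsᵀ * Vs) * R₀) := by
      rw [hUsR₀, Matrix.transpose_mul]
      simp [Matrix.mul_assoc]
    rw [h1, ← Matrix.mulVec_mulVec, Matrix.dotProduct_mulVec, Matrix.vecMul_transpose,
      ← Matrix.mulVec_mulVec]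
    have h3 : (R₀ *ᵥ v) ⬝ᵥ (R₀ *ᵥ v) = v ⬝ᵥ v := by
      rw [Matrix.dotProduct_mulVec, ← Matrix.mulVec_transpose, Matrix.mulVec_mulVec,
        hR₀2, Matrix.one_mulVec]
    calc σr * (v ⬝ᵥ v) = σr * ((R₀ *ᵥ v) ⬝ᵥ (R₀ *ᵥ v)) := by rw [h3]
      _ ≤ (R₀ *ᵥ v) ⬝ᵥ ((Vsᵀ * Vs) *ᵥ (R₀ *ᵥ v)) := rayleigh _ hherm σr hσ_le _
  -- Step 5: assembling everything
  set Δ : Matrix (Fin d) (Fin r) ℝ := U - Us with hΔdef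
  set P : Matrix (Fin r) (Fin r) ℝ := Δᵀ * Δ with hP
  set D : Matrix (Fin r) (Fin r) ℝ := Uᵀ * Δ with hD
  set Q : Matrix (Fin r) (Fin r) ℝ := Usᵀ * Us with hQ
  have hPsymm : Pᵀ = P := by rw [hP, Matrix.transpose_mul, Matrix.transpose_transpose]
  have hTS : Uᵀ * Us = Usᵀ * U := by
    have h := hSsymm
    rwa [Matrix.transpose_mul, Matrix.transpose_transpose] at h
  have hDsymm : Dᵀ = D := by
    rw [hD, hΔdef, Matrix.mul_sub]
    simp only [Matrix.transpose_sub, Matrix.transpose_mul, Matrix.transpose_transpose]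
    rw [hTS]
  set x := trace (P * P) with hxdef
  set y := trace (P * D) with hydef
  set w := trace (D * D) with hwdef
  set q2 := trace (P * Q) with hq2def
  set pt := trace P with hptdef
  have hx : 0 ≤ x := by rw [hxdef]; exact trace_sq_nonneg_of_symm P hPsymm
  have hw0 : 0 ≤ w := by rw [hwdef]; exact trace_sq_nonneg_of_symm D hDsymm
  have hcs2 : y^2 ≤ x * w := by
    rw [hxdef, hydef, hwdef]
    exact trace_cs P D hPsymm hDsymm
  have hpt : 0 ≤ pt := by
    rw [hptdef, hP, ← frob_sq]
    positivity
  have he1 : trace (P * Q) = trace (Δ * Q * Δᵀ) := by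
    rw [hP, show Δᵀ * Δ * Q = Δᵀ * (Δ * Q) from by rw [Matrix.mul_assoc],
      Matrix.trace_mul_comm]
  have he2 : pt = trace (Δ * (1 : Matrix (Fin r) (Fin r) ℝ) * Δᵀ) := by
    rw [hptdef, hP, Matrix.mul_one, Matrix.trace_mul_comm]
  have hq2ge : σr * pt ≤ q2 := by
    have hquadM : ∀ v : Fin r → ℝ,
        0 ≤ v ⬝ᵥ ((Q - σr • (1 : Matrix (Fin r) (Fin r) ℝ)) *ᵥ v) := by
      intro v
      have h := hQform v
      have hexp : (Q - σr • (1 : Matrix (Fin r) (Fin r) ℝ)) *ᵥ v = Q *ᵥ v - σr • v := by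
        rw [Matrix.sub_mulVec, Matrix.smul_mulVec, Matrix.one_mulVec]
      rw [hexp, dotProduct_sub, dotProduct_smul]
      simp only [smul_eq_mul]
      linarith
    have h0 : 0 ≤ trace (Δ * (Q - σr • 1) * Δᵀ) := trace_quad Δ _ hquadM
    have hlin : trace (Δ * (Q - σr • 1) * Δᵀ) = q2 - σr * pt := by
      rw [Matrix.mul_sub, Matrix.sub_mul, Matrix.trace_sub]
      rw [show Δ * (σr • (1 : Matrix (Fin r) (Fin r) ℝ)) * Δᵀ
          = σr • (Δ * (1 : Matrix (Fin r) (Fin r) ℝ) * Δᵀ) from by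
        rw [Matrix.mul_smul, Matrix.smul_mul], Matrix.trace_smul]
      rw [← he1, ← he2, hq2def]
      simp [smul_eq_mul]
    linarith
  have hmatS : D + Q - P = Usᵀ * U := by
    rw [hD, hQ, hP, hΔdef, Matrix.transpose_sub]
    simp only [Matrix.sub_mul, Matrix.mul_sub]
    abel
  have htrPS : 0 ≤ trace (P * (Usᵀ * U)) := by
    have hre : trace (P * (Usᵀ * U)) = trace (Δ * (Usᵀ * U) * Δᵀ) := by
      rw [hP, show Δᵀ * Δ * (Usᵀ * U) = Δᵀ * (Δ * (Usᵀ * U)) from by rw [Matrix.mul_assoc],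
        Matrix.trace_mul_comm]
    rw [hre]
    exact trace_quad Δ _ hquadS
  have h7 : x ≤ y + q2 := by
    have hlin : y + q2 - x = trace (P * (Usᵀ * U)) := by
      rw [← hmatS, hydef, hq2def, hxdef]
      rw [Matrix.mul_sub, Matrix.mul_add, Matrix.trace_sub, Matrix.trace_add]
    linarith [htrPS, hlin]
  -- the algebraic identity
  rw [frob_sq, frob_sq, frob_sq]
  have hVsUs : Vs * Vsᵀ = Us * Usᵀ := by
    rw [hUsR₀, Matrix.transpose_mul,
      show Vs * R₀ * (R₀ᵀ * Vsᵀ) = Vs * ((R₀ * R₀ᵀ) * Vsᵀ) from by simp [Matrix.mul_assoc],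
      hR₀1, Matrix.one_mul]
  have hEsym : (U * Uᵀ - Vs * Vsᵀ)ᵀ = U * Uᵀ - Vs * Vsᵀ := by
    simp [Matrix.transpose_sub, Matrix.transpose_mul]
  have hE2 : U * Uᵀ - Vs * Vsᵀ = Us * Δᵀ + Δ * Usᵀ + Δ * Δᵀ := by
    rw [hVsUs, hΔdef, Matrix.transpose_sub]
    simp only [Matrix.sub_mul, Matrix.mul_sub]
    abel
  have c_a : tr4 Us Δ Us Δ = tr4 Δ Us Δ Us := tr4_rev _ _ _ _
  have c_b : tr4 Us Δ Δ Us = tr4 Δ Us Us Δ := tr4_cyc _ _ _ _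
  have c_c : tr4 Us Δ Δ Δ = tr4 Δ Δ Δ Us := tr4_rev _ _ _ _
  have c_d : tr4 Δ Us Δ Δ = tr4 Δ Δ Δ Us := tr4_cyc _ _ _ _
  have c_e : tr4 Δ Δ Us Δ = tr4 Δ Δ Δ Us := (tr4_rev _ _ _ _).trans (tr4_cyc _ _ _ _)
  have hEE : trace ((U * Uᵀ - Vs * Vsᵀ)ᵀ * (U * Uᵀ - Vs * Vsᵀ))
      = 2 * tr4 Δ Us Δ Us + 2 * tr4 Δ Us Us Δ + 4 * tr4 Δ Δ Δ Us + tr4 Δ Δ Δ Δ := by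
    rw [hEsym, hE2]
    simp only [Matrix.add_mul, Matrix.mul_add, Matrix.trace_add]
    rw [tr2' Us Δ Us Δ, tr2' Us Δ Δ Us, tr2' Us Δ Δ Δ, tr2' Δ Us Us Δ, tr2' Δ Us Δ Us,
      tr2' Δ Us Δ Δ, tr2' Δ Δ Us Δ, tr2' Δ Δ Δ Us, tr2' Δ Δ Δ Δ]
    rw [c_a, c_b, c_c, c_d, c_e]
    ring
  have hFF : trace ((Δ * Δᵀ)ᵀ * (Δ * Δᵀ)) = tr4 Δ Δ Δ Δ := by
    rw [Matrix.transpose_mul, Matrix.transpose_transpose, tr2' Δ Δ Δ Δ]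
  have hDexp : D = Usᵀ * Δ + P := by
    rw [hD, hP, hΔdef, Matrix.transpose_sub]
    simp only [Matrix.sub_mul, Matrix.mul_sub]
    abel
  have hwE : w = tr4 Δ Us Δ Us + 2 * tr4 Δ Δ Δ Us + tr4 Δ Δ Δ Δ := by
    rw [hwdef, hDexp, hP]
    simp only [Matrix.add_mul, Matrix.mul_add, Matrix.trace_add]
    rw [tr2 Us Δ Us Δ, tr2 Us Δ Δ Δ, tr2 Δ Δ Us Δ, tr2 Δ Δ Δ Δ, c_d]
    ring
  have hq2E : q2 = tr4 Δ Us Us Δ := by rw [hq2def, hP, hQ, tr2 Δ Δ Us Us]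
  have hxE : x = tr4 Δ Δ Δ Δ := by rw [hxdef, hP, tr2 Δ Δ Δ Δ]
  rw [← hP, ← hptdef, hEE, hFF]
  have hgoalid : 3 * (2 * tr4 Δ Us Δ Us + 2 * tr4 Δ Us Us Δ + 4 * tr4 Δ Δ Δ Us
      + tr4 Δ Δ Δ Δ) - tr4 Δ Δ Δ Δ = 6 * w + 6 * q2 - 4 * x := by
    rw [hwE, hq2E, hxE]; ring
  rw [hgoalid]
  have hcore := core_ineq x y w q2 hx hw0 (le_trans (mul_nonneg hσ0 hpt) hq2ge) h7 hcs2
  have hlam : 0 ≤ 4 * Real.sqrt 3 - 6 := by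
    nlinarith [Real.sq_sqrt (show (0:ℝ) ≤ 3 by norm_num), Real.sqrt_nonneg 3]
  have hm1 : (4 * Real.sqrt 3 - 6) * (σr * pt) ≤ (4 * Real.sqrt 3 - 6) * q2 :=
    mul_le_mul_of_nonneg_left hq2ge hlam
  nlinarith [hcore, hm1]
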